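/- There is an absolute constant C > 0 such that for all integers n ≥ 1 and μ ≥ 1 the following holds. Throw μ distinguishable balls independently and uniformly at random into n bins, let Z(μ,n) be the number of empty bins, and set λ = n·exp(−μ/n). Then P[Z(μ,n) ≤ λ/2] ≤ C·√μ·exp(−λ/8). -/

import Mathlib

open Finset MeasureTheory Filter
open scoped ENNReal

attribute [local instance] Classical.propDecidable

namespace RandomKSAT

/-- A literal over `n` variables: a pair (variable, sign), `true` = positive occurrence. -/
abbrev Lit (n : ℕ) := Fin n × Bool

/-- A `k`-SAT formula with `n` variables and `m` (ordered) clauses, each an ordered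
`k`-tuple of literals. -/
abbrev Formula (n m k : ℕ) := Fin m → Fin k → Lit n

instance formulaMS (n m k : ℕ) : MeasurableSpace (Formula n m k) := ⊤

/-- The probability of an event under the uniform distribution on `Ω_k(n,m)`. -/
noncomputable def Pr (n m k : ℕ) (A : Set (Formula n m k)) : ℝ :=
  ((Finset.univ.filter (fun Φ : Formula n m k => Φ ∈ A)).card : ℝ) /
    ((Finset.univ : Finset (Formula n m k)).card : ℝ)

/-- Expectation of a random variable with respect to the uniform distribution. -/
noncomputable def EV (n m k : ℕ) (f : Formula n m k → ℝ) : ℝ :=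
  (∑ Φ : Formula n m k, f Φ) / (Fintype.card (Formula n m k) : ℝ)

/-- The uniform probability measure on `Ω_k(n,m)`. -/
noncomputable def unif (n m k : ℕ) : Measure (Formula n m k) :=
  ((Fintype.card (Formula n m k) : ℝ≥0∞))⁻¹ • Measure.count

variable {n m k : ℕ}

/-- A literal is true under an assignment. -/
def litTrue (σ : Fin n → Bool) (l : Lit n) : Prop := σ l.1 = l.2

/-- An assignment satisfies a formula if every clause contains a true literal. -/
def sat (σ : Fin n → Bool) (Φ : Formula n m k) : Prop := ∀ i, ∃ j, litTrue σ (Φ i j)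

/-- The assignment `σ_Z`: variables in `Z` are false, all others true. -/
noncomputable def sigmaZ (Z : Finset (Fin n)) : Fin n → Bool :=
  fun x => if x ∈ Z then false else true

/-- Number of positive literals of clause `i`. -/
noncomputable def posCount (Φ : Formula n m k) (i : Fin m) : ℕ :=
  (Finset.univ.filter (fun j => (Φ i j).2 = true)).card

/-- Clause `i` is all-negative. -/
def allNeg (Φ : Formula n m k) (i : Fin m) : Prop := ∀ j, (Φ i j).2 = false

/-- The set of indices of `Z`-unique clauses: exactly one positive literal with variable
outside `Z`, and no negative literal with variable in `Z`. -/
noncomputable def Uset (Φ : Formula n m k) (Z : Finset (Fin n)) : Finset (Fin m) :=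
  Finset.univ.filter (fun i =>
    (Finset.univ.filter (fun j => (Φ i j).2 = true ∧ (Φ i j).1 ∉ Z)).card = 1 ∧
    ∀ j, (Φ i j).2 = false → (Φ i j).1 ∉ Z)

/-- `U_t(x)`: the number of `Z`-unique clauses in which `x` occurs positively. -/
noncomputable def Ux (Φ : Formula n m k) (Z : Finset (Fin n)) (x : Fin n) : ℕ :=
  ((Uset Φ Z).filter (fun i => ∃ j, Φ i j = (x, true))).card

/-- `k₁ = ⌈k/2⌉`. -/
def k1 (k : ℕ) : ℕ := (k + 1) / 2

/-- The map `π₀`: `Sum.inl b` records only the sign `b` of a literal, `Sum.inr l`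
records the literal `l` itself (revealed). -/
noncomputable def pi0 (Φ : Formula n m k) (i : Fin m) (j : Fin k) : Bool ⊕ Lit n :=
  if i ∈ Uset Φ ∅ ∧ (Φ i j).2 = true then Sum.inr (Φ i j) else Sum.inl (Φ i j).2

/-- State of the Phase-1 process: the set `Z_t`, the map `π_t`, the clause `φ_t`
and variable `z_t` chosen at the last step (if any), and whether the process stopped. -/
structure P1State (n m k : ℕ) where
  Z : Finset (Fin n)
  pi : Fin m → Fin k → Bool ⊕ Lit n
  lastPhi : Option (Fin m)
  lastZ : Option (Fin n)
  stopped : Bool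

/-- One step (PI1--PI4) of the Phase-1 process. -/
noncomputable def p1step (Φ : Formula n m k) (s : P1State n m k) : P1State n m k :=
  if s.stopped then s else
  let E := Finset.univ.filter (fun i : Fin m => allNeg Φ i ∧ ∀ j, (Φ i j).1 ∉ s.Z)
  if hE : E.Nonempty then
    if hk : 0 < k then
      let φt := E.min' hE
      let J := Finset.univ.filter
        (fun j : Fin k => j.val + 1 < k1 k ∧ Ux Φ s.Z ((Φ φt j).1) = 0)
      let jsel : Fin k :=
        if hJ : J.Nonempty then J.min' hJ
        else ⟨min (k1 k - 1) (k - 1), by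
          have h1 := Nat.min_le_right (k1 k - 1) (k - 1); omega⟩
      let z := (Φ φt jsel).1
      let Z' := insert z s.Z
      { Z := Z'
        pi := fun i j =>
          if (i = φt ∧ j.val < k1 k) ∨ (Φ i j).1 ∈ Z' ∨
             (i ∈ Uset Φ Z' ∧ pi0 Φ i j = Sum.inl true)
          then Sum.inr (Φ i j) else s.pi i j
        lastPhi := some φt
        lastZ := some z
        stopped := false }
    else { s with stopped := true, lastPhi := none, lastZ := none }
  else { s with stopped := true, lastPhi := none, lastZ := none }

/-- The Phase-1 process: state after `t` steps. -/
noncomputable def p1 (Φ : Formula n m k) : ℕ → P1State n m k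
  | 0 => ⟨∅, pi0 Φ, none, none, false⟩
  | t + 1 => p1step Φ (p1 Φ t)

/-- The stopping time `T` of the Phase-1 process. -/
noncomputable def TT (Φ : Formula n m k) : ℕ := sInf {t | (p1 Φ (t + 1)).stopped = true}

/-- The set `Z = Z_T` produced by Phase 1. -/
noncomputable def ZT (Φ : Formula n m k) : Finset (Fin n) := (p1 Φ (TT Φ)).Z

/-- The set `𝒰_t`: clauses with a positive literal, but such that at time `t` no
position shows `π_t(i,j) = 1` nor a negative literal with variable in `Z_t`. -/
noncomputable def curlyU (Φ : Formula n m k) (t : ℕ) : Finset (Fin m) :=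
  Finset.univ.filter (fun i =>
    (∃ j, pi0 Φ i j ≠ Sum.inl false) ∧
    ¬ ∃ j, (p1 Φ t).pi i j = Sum.inl true ∨
      ∃ x ∈ (p1 Φ t).Z, (p1 Φ t).pi i j = Sum.inr (x, false))

/-- The map `ψ_t : 𝒰_t → V` (junk value outside `𝒰_t`). -/
noncomputable def psi (hn : 0 < n) (Φ : Formula n m k) (t : ℕ) (i : Fin m) : Fin n :=
  let s := sInf {s | i ∈ curlyU Φ s}
  if h : (Finset.univ.filter
      (fun j : Fin k => (Φ i j).2 = true ∧ (Φ i j).1 ∉ (p1 Φ s).Z)).Nonempty then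
    (Φ i ((Finset.univ.filter
      (fun j : Fin k => (Φ i j).2 = true ∧ (Φ i j).1 ∉ (p1 Φ s).Z)).min' h)).1
  else ((p1 Φ s).lastZ).getD ⟨0, hn⟩

/-- Clause `i` is `(Z,Z')`-endangered. -/
def endangered (Φ : Formula n m k) (Z Z' : Finset (Fin n)) (i : Fin m) : Prop :=
  ¬ ∃ j, litTrue (sigmaZ Z) (Φ i j) ∧ (Φ i j).1 ∉ Z'

/-- A variable is `(Z,Z')`-unsafe. -/
def unsafeVar (Φ : Formula n m k) (Z Z' : Finset (Fin n)) (x : Fin n) : Prop :=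
  x ∈ Z ∪ Z' ∨ ∃ i l, Φ i l = (x, true) ∧ ∀ j, j ≠ l →
    (((Φ i j).2 = true ∧ (Φ i j).1 ∈ Z ∪ Z') ∨ ((Φ i j).2 = false ∧ (Φ i j).1 ∉ Z))

/-- The Phase-2 while-loop with fuel. -/
noncomputable def p2go (Φ : Formula n m k) (Z : Finset (Fin n)) :
    ℕ → Finset (Fin n) → Finset (Fin n)
  | 0, Z' => Z'
  | f + 1, Z' =>
    let Q := Finset.univ.filter (fun i : Fin m =>
      endangered Φ Z Z' i ∧
        (Finset.univ.filter (fun j => (Φ i j).1 ∈ Z')).card < 3)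
    if hQ : Q.Nonempty then
      let i := Q.min' hQ
      let Ssafe := Finset.univ.filter (fun j : Fin k =>
        k1 k ≤ j.val ∧ j.val + 6 ≤ k ∧ ¬ unsafeVar Φ Z Z' ((Φ i j).1))
      let S := if 3 ≤ Ssafe.card then Ssafe
        else Finset.univ.filter (fun j : Fin k => k ≤ j.val + 5 ∧ (Φ i j).1 ∉ Z')
      p2go Φ Z f (Z' ∪ (((S.sort (· ≤ ·)).take 3).map (fun j => (Φ i j).1)).toFinset)
    else Z'

/-- The set `Z'` produced by Phase 2. -/
noncomputable def p2 (Φ : Formula n m k) : Finset (Fin n) := p2go Φ (ZT Φ) m ∅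

/-- `f` is a matching in the bipartite graph `G(Φ,Z,Z')` covering all
`(Z,Z')`-endangered clauses: it assigns to each endangered clause a variable of `Z'`
occurring in it, injectively on endangered clauses. -/
def coversEndangered (Φ : Formula n m k) (Z Z' : Finset (Fin n)) (f : Fin m → Fin n) : Prop :=
  (∀ i, endangered Φ Z Z' i → f i ∈ Z' ∧ ∃ j, (Φ i j).1 = f i) ∧
  ∀ i i', endangered Φ Z Z' i → endangered Φ Z Z' i' → f i = f i' → i = i'

/-- The output of the algorithm `Fix` (Phase 3): the assignment `σ_{Z,Z',M}` if a
matching `M` covering all `(Z,Z')`-endangered clauses exists, `none` ("fail") otherwise. -/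
noncomputable def fixOutput (Φ : Formula n m k) : Option (Fin n → Bool) :=
  if h : ∃ f : Fin m → Fin n, coversEndangered Φ (ZT Φ) (p2 Φ) f then
    some (fun x =>
      if x ∈ ZT Φ ∧ x ∉ p2 Φ then false
      else if ∃ i, endangered Φ (ZT Φ) (p2 Φ) i ∧ Classical.choose h i = x ∧
          ∃ j, Φ i j = (x, false) then false
      else true)
  else none

/-- The `σ`-algebra `F_t` generated by the equivalence classes of `≡_t`. -/
noncomputable def Ft (n m k : ℕ) (t : ℕ) : MeasurableSpace (Formula n m k) :=
  MeasurableSpace.comap (fun Φ : Formula n m k => fun s : Fin (t + 1) => (p1 Φ s.val).pi) ⊤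

/-- The `≡_t`-equivalence class of `Φ`. -/
noncomputable def cls (t : ℕ) (Φ : Formula n m k) : Finset (Formula n m k) :=
  Finset.univ.filter (fun Ψ => ∀ s ≤ t, (p1 Ψ s).pi = (p1 Φ s).pi)

/-- The set `E_t` of positions whose literal is not yet revealed at time `t`. -/
noncomputable def Et (Φ : Formula n m k) (t : ℕ) : Finset (Fin m × Fin k) :=
  Finset.univ.filter (fun p => ∃ b, (p1 Φ t).pi p.1 p.2 = Sum.inl b)

/-- `ω = (1-ε) ln k`. -/
noncomputable def omOf (ε : ℝ) (k : ℕ) : ℝ := (1 - ε) * Real.log k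

/-- `m = ⌊(1-ε) 2^k k⁻¹ (ln k) n⌋`. -/
noncomputable def mOf (ε : ℝ) (k n : ℕ) : ℕ := ⌊(1 - ε) * 2 ^ k * Real.log k / k * n⌋₊

/-- `θ = ⌊4 n k⁻¹ ln ω⌋`. -/
noncomputable def thetaOf (ε : ℝ) (k n : ℕ) : ℕ := ⌊4 * (n : ℝ) / k * Real.log (omOf ε k)⌋₊

/-- The indicator random variable `B_t` of Corollary 9. -/
noncomputable def Bt (ε : ℝ) (n m k : ℕ) (t : ℕ) : Formula n m k → ℝ := fun Φ =>
  if t ≤ TT Φ ∧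
      (∃ i, (p1 Φ t).lastPhi = some i ∧
        ∀ j : Fin k, j.val + 1 < k1 k → 0 < Ux Φ (p1 Φ (t - 1)).Z ((Φ i j).1)) ∧
      ((n : ℝ) * (k : ℝ) ^ (ε / 2 - 1) ≤
        ((Finset.univ.filter (fun x : Fin n =>
          x ∉ (p1 Φ (t - 1)).Z ∧ Ux Φ (p1 Φ (t - 1)).Z x = 0)).card : ℝ)) ∧
      (((Uset Φ (p1 Φ t).Z).card : ℝ) ≤ (1 + ε / 3) * omOf ε k * n)
  then 1 else 0

/-- The indicator `H_{tij}`. -/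
noncomputable def Hind (n m k : ℕ) (t : ℕ) (i : Fin m) (j : Fin k) : Formula n m k → ℝ :=
  fun Φ =>
  if (p1 Φ (t - 1)).pi i j = Sum.inl true ∧
      ∃ z, (p1 Φ t).lastZ = some z ∧ (p1 Φ t).pi i j = Sum.inr (z, true)
  then 1 else 0

/-- The indicator `S_{tij}`. -/
noncomputable def Sind (n m k : ℕ) (t : ℕ) (i : Fin m) (j : Fin k) : Formula n m k → ℝ :=
  fun Φ => if t ≤ TT Φ ∧ ∃ b, (p1 Φ t).pi i j = Sum.inl b then 1 else 0


namespace BBaux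

/-- The count vector of a function. -/
noncomputable def cvec {μ n : ℕ} (f : Fin μ → Fin n) : Fin n → ℕ :=
  fun b => (Finset.univ.filter (fun a => f a = b)).card

lemma cvec_sum {μ n : ℕ} (f : Fin μ → Fin n) : ∑ b, cvec f b = μ := by
  classical
  have := Finset.card_eq_sum_card_fiberwise
    (f := f) (s := Finset.univ) (t := Finset.univ) (fun a _ => Finset.mem_univ (f a))
  simpa [cvec] using this.symm

lemma cvec_cons {μ n : ℕ} (b : Fin n) (f : Fin μ → Fin n) (c : Fin n) :
    cvec (Fin.cons b f : Fin (μ+1) → Fin n) c = (if b = c then 1 else 0) + cvec f c := by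
  classical
  simp only [cvec, Finset.card_filter]
  rw [Fin.sum_univ_succ]
  simp [Fin.cons_zero, Fin.cons_succ]

lemma fiber_card_mul_le {n : ℕ} : ∀ (μ : ℕ) (v : Fin n → ℕ),
    (Finset.univ.filter (fun f : Fin μ → Fin n => cvec f = v)).card * ∏ b, (v b).factorial
      ≤ μ.factorial := by
  classical
  intro μ
  induction μ with
  | zero =>
    intro v
    rcases (Finset.univ.filter (fun f : Fin 0 → Fin n => cvec f = v)).eq_empty_or_nonempty
      with h | h
    · rw [h]; simp
    · obtain ⟨f, hf⟩ := h
      simp only [Finset.mem_filter] at hf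
      have hv : v = fun _ => 0 := by
        funext b; rw [← hf.2]; simp [cvec]
      subst hv
      have h1 : (Finset.univ.filter (fun f : Fin 0 → Fin n => cvec f = fun _ => 0)).card ≤ 1 := by
        refine le_trans (Finset.card_le_univ _) ?_
        simp [Finset.card_univ]
      simpa using h1
  | succ μ ih =>
    intro v
    rcases (Finset.univ.filter (fun f : Fin (μ+1) → Fin n => cvec f = v)).eq_empty_or_nonempty
      with hF | hF
    · rw [hF]; simp
    obtain ⟨f₀, hf₀⟩ := hF
    simp only [Finset.mem_filter] at hf₀
    have hvsum : ∑ b, v b = μ + 1 := by rw [← hf₀.2]; exact cvec_sum f₀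
    -- key equivalence
    have key : ∀ (b : Fin n) (f' : Fin μ → Fin n),
        (cvec (Fin.cons b f' : Fin (μ+1) → Fin n) = v) ↔
          (0 < v b ∧ cvec f' = Function.update v b (v b - 1)) := by
      intro b f'
      constructor
      · intro h
        have hb := congrFun h b
        rw [cvec_cons, if_pos rfl] at hb
        refine ⟨by omega, ?_⟩
        funext c
        by_cases hc : c = b
        · subst hc; rw [Function.update_self]; omega
        · have hcc := congrFun h c
          rw [cvec_cons, if_neg (fun hbc => hc hbc.symm)] at hcc
          rw [Function.update_of_ne hc]
          omega
      · rintro ⟨hb, h⟩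
        funext c
        rw [cvec_cons, congrFun h c]
        by_cases hc : c = b
        · subst hc; rw [if_pos rfl, Function.update_self]; omega
        · rw [if_neg (fun hbc => hc hbc.symm), Function.update_of_ne hc]
          omega
    -- decomposition of the fiber cardinality
    have hdec : (Finset.univ.filter (fun f : Fin (μ+1) → Fin n => cvec f = v)).card
        = ∑ b : Fin n, if 0 < v b then
            (Finset.univ.filter (fun f' : Fin μ → Fin n =>
              cvec f' = Function.update v b (v b - 1))).card else 0 := by
      rw [Finset.card_filter]
      have hbij : ∑ f : Fin (μ+1) → Fin n, (if cvec f = v then 1 else 0)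
          = ∑ p : Fin n × (Fin μ → Fin n),
              (if cvec (Fin.cons p.1 p.2 : Fin (μ+1) → Fin n) = v then 1 else 0) := by
        exact (Fintype.sum_bijective _ (Fin.consEquiv (fun _ : Fin (μ+1) => Fin n)).bijective
          _ _ (fun p => rfl)).symm
      rw [hbij, Fintype.sum_prod_type]
      refine Finset.sum_congr rfl (fun b _ => ?_)
      by_cases hb : 0 < v b
      · rw [if_pos hb, Finset.card_filter]
        refine Finset.sum_congr rfl (fun f' _ => ?_)
        simp only [key, hb, true_and]
      · rw [if_neg hb]
        refine Finset.sum_eq_zero (fun f' _ => ?_)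
        simp only [key, hb, false_and, if_false]
    rw [hdec, Finset.sum_mul]
    have hterm : ∀ b : Fin n,
        (if 0 < v b then
            (Finset.univ.filter (fun f' : Fin μ → Fin n =>
              cvec f' = Function.update v b (v b - 1))).card else 0) * ∏ c, (v c).factorial
          ≤ v b * μ.factorial := by
      intro b
      by_cases hb : 0 < v b
      · rw [if_pos hb]
        have hprod : (∏ c, (v c).factorial)
            = v b * ∏ c, (Function.update v b (v b - 1) c).factorial := by
          have h1 : (fun c => (Function.update v b (v b - 1) c).factorial)
              = Function.update (fun c => (v c).factorial) b ((v b - 1).factorial) := by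
            funext c
            by_cases hc : c = b
            · subst hc; simp
            · simp [Function.update_of_ne hc]
          rw [h1, Finset.prod_update_of_mem (Finset.mem_univ b),
            ← Finset.mul_prod_erase _ (fun c => (v c).factorial) (Finset.mem_univ b),
            Finset.erase_eq, ← mul_assoc, Nat.mul_factorial_pred hb.ne']
        calc (Finset.univ.filter (fun f' : Fin μ → Fin n =>
              cvec f' = Function.update v b (v b - 1))).card * ∏ c, (v c).factorial
            = v b * ((Finset.univ.filter (fun f' : Fin μ → Fin n =>
                cvec f' = Function.update v b (v b - 1))).card
                  * ∏ c, (Function.update v b (v b - 1) c).factorial) := by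
              rw [hprod]; ring
          _ ≤ v b * μ.factorial := Nat.mul_le_mul_left _ (ih _)
      · rw [if_neg hb]
        simp
    calc ∑ b : Fin n, (if 0 < v b then
            (Finset.univ.filter (fun f' : Fin μ → Fin n =>
              cvec f' = Function.update v b (v b - 1))).card else 0) * ∏ c, (v c).factorial
        ≤ ∑ b : Fin n, v b * μ.factorial := Finset.sum_le_sum (fun b _ => hterm b)
      _ = (∑ b, v b) * μ.factorial := by rw [Finset.sum_mul]
      _ = (μ+1).factorial := by rw [hvsum, Nat.factorial_succ]


def zcard {μ n : ℕ} (f : Fin μ → Fin n) : ℕ :=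
  (Finset.univ.filter (fun b : Fin n => ∀ a, f a ≠ b)).card

def zc {n : ℕ} (v : Fin n → ℕ) : ℕ := (Finset.univ.filter (fun b : Fin n => v b = 0)).card

lemma zcard_eq {μ n : ℕ} (f : Fin μ → Fin n) : zcard f = zc (cvec f) := by
  classical
  unfold zcard zc
  congr 1
  refine Finset.filter_congr (fun b _ => ?_)
  unfold cvec
  rw [Finset.card_eq_zero, Finset.filter_eq_empty_iff]
  constructor
  · intro h a _; exact h a
  · intro h a; exact h (Finset.mem_univ a)

set_option maxHeartbeats 1000000 in
lemma main_bound (n μ : ℕ) (hn : 1 ≤ n) (hμ : 1 ≤ μ) :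
    ((Finset.univ.filter (fun f : Fin μ → Fin n =>
        ((Finset.univ.filter (fun b : Fin n => ∀ a, f a ≠ b)).card : ℝ)
          ≤ (n : ℝ) * Real.exp (-(μ : ℝ) / n) / 2)).card : ℝ)
      ≤ Real.exp 1 * Real.sqrt μ *
        Real.exp (-((n : ℝ) * Real.exp (-(μ : ℝ) / n)) / 8) * (n:ℝ)^μ := by
  classical
  have hn0 : (0:ℝ) < n := by exact_mod_cast hn
  have hμ0 : (0:ℝ) < μ := by exact_mod_cast hμ
  set c : ℝ := (μ:ℝ) / n with hcdef
  have hc0 : 0 < c := by positivity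
  have hexpc1 : (1:ℝ) ≤ Real.exp c := by
    nlinarith [Real.add_one_le_exp c]
  set p : ℝ := Real.exp (-c) with hpdef
  have hp0 : 0 < p := Real.exp_pos _
  set lam : ℝ := (n:ℝ) * p with hlamdef
  have hlam0 : 0 < lam := by positivity
  have harg : -(μ : ℝ) / (n:ℝ) = -c := by rw [hcdef]; ring
  have hgoalexp : -((n : ℝ) * Real.exp (-(μ : ℝ) / n)) / 8 = -lam/8 := by
    rw [harg, hlamdef, hpdef]
  have hhalf : (n : ℝ) * Real.exp (-(μ : ℝ) / n) / 2 = lam / 2 := by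
    rw [harg, hlamdef, hpdef]
  rw [hgoalexp, hhalf]
  have hcardrw : (Finset.univ.filter (fun f : Fin μ → Fin n =>
      ((Finset.univ.filter (fun b : Fin n => ∀ a, f a ≠ b)).card : ℝ) ≤ lam / 2))
      = (Finset.univ.filter (fun f : Fin μ → Fin n => ((zcard f : ℝ)) ≤ lam / 2)) := rfl
  rw [hcardrw]
  set S : ℝ := ∑ f : Fin μ → Fin n, (2⁻¹ : ℝ) ^ (zcard f) with hSdef
  have hlog2 : (0:ℝ) ≤ Real.log 2 := Real.log_nonneg one_le_two
  -- Step A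
  have hstepA : ((Finset.univ.filter (fun f : Fin μ → Fin n => ((zcard f : ℝ)) ≤ lam / 2)).card : ℝ)
      ≤ Real.exp (Real.log 2 * (lam/2)) * S := by
    rw [hSdef, Finset.mul_sum]
    have h1 : ((Finset.univ.filter (fun f : Fin μ → Fin n => ((zcard f:ℝ)) ≤ lam / 2)).card : ℝ)
        = ∑ _f ∈ Finset.univ.filter (fun f : Fin μ → Fin n => ((zcard f:ℝ)) ≤ lam / 2), (1:ℝ) := by
      simp
    rw [h1]
    refine le_trans (Finset.sum_le_sum (fun f hf => ?_))
      (Finset.sum_le_sum_of_subset_of_nonneg (Finset.filter_subset _ _)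
        (fun f _ _ => by positivity))
    simp only [Finset.mem_filter] at hf
    have hz : (zcard f : ℝ) ≤ lam / 2 := hf.2
    have h2 : (2⁻¹:ℝ) ^ (zcard f) = Real.exp ((zcard f : ℕ) * (- Real.log 2)) := by
      rw [Real.exp_nat_mul, Real.exp_neg, Real.exp_log two_pos]
    rw [h2, ← Real.exp_add]
    have h4 : (0:ℝ) ≤ Real.log 2 * (lam/2) + (zcard f : ℕ) * (-Real.log 2) := by
      have : Real.log 2 * (lam/2) + (zcard f : ℕ) * (-Real.log 2)
          = Real.log 2 * (lam/2 - (zcard f : ℕ)) := by ring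
      rw [this]
      exact mul_nonneg hlog2 (by linarith)
    nlinarith [Real.add_one_le_exp (Real.log 2 * (lam/2) + (zcard f : ℕ) * (-Real.log 2))]
  -- Step B : grouping
  set V : Finset (Fin n → ℕ) :=
    (Fintype.piFinset fun _ : Fin n => Finset.range (μ+1)).filter (fun v => ∑ b, v b = μ)
    with hVdef
  have hmaps : ∀ f : Fin μ → Fin n, f ∈ (Finset.univ : Finset (Fin μ → Fin n)) → cvec f ∈ V := by
    intro f _
    rw [hVdef, Finset.mem_filter]
    refine ⟨?_, cvec_sum f⟩
    rw [Fintype.mem_piFinset]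
    intro b
    rw [Finset.mem_range, Nat.lt_succ_iff]
    calc cvec f b ≤ (Finset.univ : Finset (Fin μ)).card := Finset.card_filter_le _ _
      _ = μ := by simp
  have hgroup : S = ∑ v ∈ V,
      (((Finset.univ.filter (fun f : Fin μ → Fin n => cvec f = v)).card : ℝ)
        * (2⁻¹:ℝ) ^ (zc v)) := by
    rw [hSdef, ← Finset.sum_fiberwise_of_maps_to hmaps (fun f => (2⁻¹:ℝ) ^ (zcard f))]
    refine Finset.sum_congr rfl (fun v hv => ?_)
    calc ∑ f ∈ Finset.univ.filter (fun f : Fin μ → Fin n => cvec f = v), (2⁻¹:ℝ) ^ (zcard f)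
        = ∑ _f ∈ Finset.univ.filter (fun f : Fin μ → Fin n => cvec f = v), (2⁻¹:ℝ) ^ (zc v) := by
          refine Finset.sum_congr rfl (fun f hf => ?_)
          rw [zcard_eq f, (Finset.mem_filter.mp hf).2]
      _ = _ := by rw [Finset.sum_const, nsmul_eq_mul]
  set wf : ℕ → ℝ := fun k => if k = 0 then (2⁻¹:ℝ) else c^k / (k.factorial : ℝ) with hwfdef
  have hwf0 : ∀ k, 0 ≤ wf k := by
    intro k
    rw [hwfdef]
    dsimp only
    split
    · norm_num
    · positivity
  -- Step C : per fiber bound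
  have hprodwf : ∀ v ∈ V,
      (((Finset.univ.filter (fun f : Fin μ → Fin n => cvec f = v)).card : ℝ)
        * (2⁻¹:ℝ) ^ (zc v))
      ≤ ((μ.factorial : ℝ) / c ^ μ) * ∏ b, wf (v b) := by
    intro v hv
    have hvsum : ∑ b, v b = μ := (Finset.mem_filter.mp hv).2
    have hfact_pos : (0:ℝ) < ∏ b, ((v b).factorial : ℝ) := by positivity
    have h0 : ∏ b ∈ Finset.univ.filter (fun b => v b = 0), wf (v b) = (2⁻¹:ℝ) ^ (zc v) := by
      calc ∏ b ∈ Finset.univ.filter (fun b => v b = 0), wf (v b)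
          = ∏ _b ∈ Finset.univ.filter (fun b => v b = 0), (2⁻¹:ℝ) := by
            refine Finset.prod_congr rfl (fun b hb => ?_)
            rw [hwfdef]
            dsimp only
            rw [if_pos (Finset.mem_filter.mp hb).2]
        _ = _ := by rw [Finset.prod_const]; rfl
    have h1 : ∏ b ∈ Finset.univ.filter (fun b => ¬ v b = 0), wf (v b)
        = ∏ b ∈ Finset.univ.filter (fun b => ¬ v b = 0), (c ^ (v b) / ((v b).factorial : ℝ)) := by
      refine Finset.prod_congr rfl (fun b hb => ?_)
      rw [hwfdef]
      dsimp only
      rw [if_neg (Finset.mem_filter.mp hb).2]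
    have h2 : ∏ b, (c ^ (v b) / ((v b).factorial : ℝ))
        = c ^ μ / ∏ b, ((v b).factorial : ℝ) := by
      rw [Finset.prod_div_distrib, Finset.prod_pow_eq_pow_sum, hvsum]
    have h3 : ∏ b ∈ Finset.univ.filter (fun b => v b = 0),
        (c ^ (v b) / ((v b).factorial : ℝ)) = 1 := by
      refine Finset.prod_eq_one (fun b hb => ?_)
      rw [(Finset.mem_filter.mp hb).2]
      norm_num
    have h4 := Finset.prod_filter_mul_prod_filter_not Finset.univ (fun b => v b = 0)
      (fun b => (c ^ (v b) / ((v b).factorial : ℝ)))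
    have key1 : ∏ b, wf (v b) = (2⁻¹:ℝ) ^ (zc v) * (c ^ μ / ∏ b, ((v b).factorial : ℝ)) := by
      rw [← Finset.prod_filter_mul_prod_filter_not Finset.univ (fun b => v b = 0)
        (fun b => wf (v b)), h0, h1]
      rw [← h4, h3, one_mul] at h2
      rw [h2]
    have hfibN := fiber_card_mul_le (n := n) μ v
    have hfib : ((Finset.univ.filter (fun f : Fin μ → Fin n => cvec f = v)).card : ℝ)
        * ∏ b, ((v b).factorial : ℝ) ≤ (μ.factorial : ℝ) := by
      have : (((Finset.univ.filter (fun f : Fin μ → Fin n => cvec f = v)).card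
          * ∏ b, (v b).factorial : ℕ) : ℝ) ≤ ((μ.factorial : ℕ) : ℝ) := by
        exact_mod_cast hfibN
      push_cast at this
      exact this
    rw [key1]
    have hx : (0:ℝ) ≤ (2⁻¹:ℝ)^(zc v) := by positivity
    have hcpow : (0:ℝ) < c ^ μ := by positivity
    have halg : ((μ.factorial : ℝ) / c ^ μ)
        * ((2⁻¹:ℝ)^(zc v) * (c ^ μ / ∏ b, ((v b).factorial : ℝ)))
        = (2⁻¹:ℝ)^(zc v) * ((μ.factorial : ℝ) / ∏ b, ((v b).factorial : ℝ)) := by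
      field_simp <;> ring
    rw [halg, mul_comm]
    refine mul_le_mul_of_nonneg_left ?_ hx
    rw [le_div_iff₀ hfact_pos]
    exact hfib
  -- Step D
  have hS2 : S ≤ ((μ.factorial : ℝ) / c ^ μ) * (Real.exp c - 2⁻¹) ^ n := by
    rw [hgroup]
    have hd1 : ∑ v ∈ V, (((Finset.univ.filter (fun f : Fin μ → Fin n => cvec f = v)).card : ℝ)
          * (2⁻¹:ℝ) ^ (zc v))
        ≤ ∑ v ∈ V, ((μ.factorial : ℝ) / c ^ μ) * ∏ b, wf (v b) := Finset.sum_le_sum hprodwf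
    refine le_trans hd1 ?_
    rw [← Finset.mul_sum]
    have hd2 : ∑ v ∈ V, ∏ b, wf (v b)
        ≤ ∑ v ∈ Fintype.piFinset (fun _ : Fin n => Finset.range (μ+1)), ∏ b, wf (v b) := by
      refine Finset.sum_le_sum_of_subset_of_nonneg (Finset.filter_subset _ _)
        (fun v _ _ => Finset.prod_nonneg (fun b _ => hwf0 _))
    have hd3 : ∑ v ∈ Fintype.piFinset (fun _ : Fin n => Finset.range (μ+1)), ∏ b, wf (v b)
        = (∑ k ∈ Finset.range (μ+1), wf k) ^ n := by
      rw [← Finset.prod_univ_sum]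
      rw [Finset.prod_const, Finset.card_univ, Fintype.card_fin]
    have hd4 : ∑ k ∈ Finset.range (μ+1), wf k ≤ Real.exp c - 2⁻¹ := by
      have hs1 := Finset.sum_range_succ' wf μ
      have hs2 : ∑ k ∈ Finset.range (μ+1), (c^k / (k.factorial : ℝ))
          = (∑ k ∈ Finset.range μ, (c^(k+1) / (((k+1).factorial : ℕ) : ℝ))) + 1 := by
        rw [Finset.sum_range_succ' (fun k => c^k / ((k.factorial : ℕ) : ℝ))]
        norm_num
      have hs3 : ∀ k, wf (k+1) = c^(k+1) / (((k+1).factorial : ℕ) : ℝ) := by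
        intro k
        simp [hwfdef]
      have hs4 : ∑ k ∈ Finset.range (μ+1), (c^k / (k.factorial : ℝ)) ≤ Real.exp c :=
        Real.sum_le_exp_of_nonneg hc0.le _
      have hwfz : wf 0 = 2⁻¹ := by simp [hwfdef]
      simp only [hs3] at hs1
      rw [hs1, hwfz]
      linarith
    have hsum_nonneg : (0:ℝ) ≤ ∑ k ∈ Finset.range (μ+1), wf k :=
      Finset.sum_nonneg (fun k _ => hwf0 k)
    refine mul_le_mul_of_nonneg_left ?_ (by positivity)
    refine le_trans hd2 ?_
    rw [hd3]
    exact pow_le_pow_left₀ hsum_nonneg hd4 n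
  -- Step E
  have hcn : c * (n:ℝ) = μ := div_mul_cancel₀ _ hn0.ne'
  have hE : (Real.exp c - 2⁻¹) ^ n ≤ Real.exp (μ:ℝ) * Real.exp (-lam/2) := by
    have h2 : Real.exp c * p = 1 := by
      rw [hpdef, ← Real.exp_add]
      simp
    have heq1 : Real.exp c - 2⁻¹ = Real.exp c * (1 - p/2) := by
      have expand : Real.exp c * (1 - p/2) = Real.exp c - (Real.exp c * p)/2 := by ring
      rw [expand, h2]
      norm_num
    have h3 : 1 - p/2 ≤ Real.exp (-(p/2)) := by
      nlinarith [Real.add_one_le_exp (-(p/2))]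
    have hbase : Real.exp c - 2⁻¹ ≤ Real.exp (c - p/2) := by
      rw [heq1, Real.exp_sub]
      calc Real.exp c * (1 - p/2) ≤ Real.exp c * Real.exp (-(p/2)) :=
            mul_le_mul_of_nonneg_left h3 (Real.exp_pos c).le
        _ = Real.exp c / Real.exp (p/2) := by rw [Real.exp_neg]; ring
    have hbase0 : (0:ℝ) ≤ Real.exp c - 2⁻¹ := by linarith
    calc (Real.exp c - 2⁻¹) ^ n ≤ (Real.exp (c - p/2)) ^ n := pow_le_pow_left₀ hbase0 hbase n
      _ = Real.exp ((n:ℝ) * (c - p/2)) := (Real.exp_nat_mul _ n).symm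
      _ = Real.exp ((μ:ℝ) + (-lam/2)) := by
          congr 1
          rw [hlamdef]
          linear_combination hcn
      _ = Real.exp (μ:ℝ) * Real.exp (-lam/2) := Real.exp_add _ _
  -- Step F : Stirling
  have hstirling : (μ.factorial : ℝ) ≤ Real.exp 1 * Real.sqrt μ * ((μ:ℝ) / Real.exp 1) ^ μ := by
    have h2 := Stirling.stirlingSeq'_antitone (Nat.zero_le (μ-1))
    simp only [Function.comp] at h2
    rw [Nat.succ_eq_add_one, Nat.sub_add_cancel hμ] at h2
    rw [Stirling.stirlingSeq_one] at h2
    have hden : (0:ℝ) < Real.sqrt (2*(μ:ℝ)) * ((μ:ℝ)/Real.exp 1)^μ := by positivity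
    have h3 : (μ.factorial : ℝ)
        = Stirling.stirlingSeq μ * (Real.sqrt (2*(μ:ℝ)) * ((μ:ℝ)/Real.exp 1)^μ) := by
      rw [Stirling.stirlingSeq]
      field_simp
    rw [h3]
    calc Stirling.stirlingSeq μ * (Real.sqrt (2*(μ:ℝ)) * ((μ:ℝ)/Real.exp 1)^μ)
        ≤ (Real.exp 1 / Real.sqrt 2) * (Real.sqrt (2*(μ:ℝ)) * ((μ:ℝ)/Real.exp 1)^μ) :=
          mul_le_mul_of_nonneg_right h2 hden.le
      _ = Real.exp 1 * Real.sqrt μ * ((μ:ℝ)/Real.exp 1)^μ := by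
          rw [Real.sqrt_mul (by norm_num : (0:ℝ) ≤ 2)]
          have hs2 : Real.sqrt 2 ≠ 0 := by positivity
          field_simp
  have hstir2 : (μ.factorial:ℝ) * Real.exp (μ:ℝ) ≤ Real.exp 1 * Real.sqrt μ * (μ:ℝ)^μ := by
    have hm : ((μ:ℝ)/Real.exp 1)^μ = (μ:ℝ)^μ / Real.exp 1 ^ μ := div_pow _ _ _
    have hexpμ : Real.exp 1 ^ μ = Real.exp (μ:ℝ) := by
      rw [← Real.exp_nat_mul]
      norm_num
    have h5 := mul_le_mul_of_nonneg_right hstirling (Real.exp_pos (μ:ℝ)).le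
    calc (μ.factorial:ℝ) * Real.exp (μ:ℝ)
        ≤ Real.exp 1 * Real.sqrt μ * ((μ:ℝ)/Real.exp 1)^μ * Real.exp (μ:ℝ) := h5
      _ = Real.exp 1 * Real.sqrt μ * (μ:ℝ)^μ := by
          rw [hm, hexpμ]
          field_simp
  have hF : ((μ.factorial : ℝ) / c ^ μ) * Real.exp (μ:ℝ) ≤ Real.exp 1 * Real.sqrt μ * (n:ℝ)^μ := by
    have hcpoweq : c ^ μ = (μ:ℝ)^μ / (n:ℝ)^μ := by rw [hcdef, div_pow]
    have hcpow0 : (0:ℝ) < c ^ μ := by positivity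
    rw [div_mul_eq_mul_div, div_le_iff₀ hcpow0, hcpoweq]
    have hrhs : Real.exp 1 * Real.sqrt μ * (n:ℝ)^μ * ((μ:ℝ)^μ/(n:ℝ)^μ)
        = Real.exp 1 * Real.sqrt μ * (μ:ℝ)^μ := by
      field_simp
    rw [hrhs]
    exact hstir2
  -- final assembly
  have hS0 : 0 ≤ S := by
    rw [hSdef]
    exact Finset.sum_nonneg (fun f _ => by positivity)
  have hchain : ((Finset.univ.filter (fun f : Fin μ → Fin n => ((zcard f : ℝ)) ≤ lam / 2)).card : ℝ)
      ≤ (((μ.factorial : ℝ) / c ^ μ) * Real.exp (μ:ℝ))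
        * (Real.exp (Real.log 2 * (lam/2)) * Real.exp (-lam/2)) := by
    refine le_trans hstepA ?_
    calc Real.exp (Real.log 2 * (lam/2)) * S
        ≤ Real.exp (Real.log 2 * (lam/2)) * (((μ.factorial : ℝ) / c ^ μ) * (Real.exp c - 2⁻¹) ^ n) :=
          mul_le_mul_of_nonneg_left hS2 (Real.exp_pos _).le
      _ ≤ Real.exp (Real.log 2 * (lam/2)) * (((μ.factorial : ℝ) / c ^ μ)
            * (Real.exp (μ:ℝ) * Real.exp (-lam/2))) := by
          refine mul_le_mul_of_nonneg_left ?_ (Real.exp_pos _).le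
          exact mul_le_mul_of_nonneg_left hE (by positivity)
      _ = (((μ.factorial : ℝ) / c ^ μ) * Real.exp (μ:ℝ))
            * (Real.exp (Real.log 2 * (lam/2)) * Real.exp (-lam/2)) := by ring
  refine le_trans hchain ?_
  have hexp8 : Real.exp (Real.log 2 * (lam/2)) * Real.exp (-lam/2) ≤ Real.exp (-lam/8) := by
    rw [← Real.exp_add]
    refine Real.exp_le_exp.mpr ?_
    nlinarith [Real.log_two_lt_d9, hlam0]
  calc (((μ.factorial : ℝ) / c ^ μ) * Real.exp (μ:ℝ))
        * (Real.exp (Real.log 2 * (lam/2)) * Real.exp (-lam/2))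
      ≤ (Real.exp 1 * Real.sqrt μ * (n:ℝ)^μ) * Real.exp (-lam/8) := by
        refine mul_le_mul hF hexp8 (by positivity) (by positivity)
    _ = Real.exp 1 * Real.sqrt μ * Real.exp (-lam/8) * (n:ℝ)^μ := by ring

end BBaux

/-- Lemma 1, balls and bins.  There is an absolute constant `C > 0`
such that if `μ ≥ 1` balls are thrown independently and uniformly at random into
`n ≥ 1` bins and `Z(μ,n)` is the number of empty bins, then with `λ = n·exp(-μ/n)` one
has `P[Z(μ,n) ≤ λ/2] ≤ C √μ exp(-λ/8)`. -/
theorem statement1 :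
    ∃ C : ℝ, 0 < C ∧ ∀ n μ : ℕ, 1 ≤ n → 1 ≤ μ →
      ((Finset.univ.filter (fun f : Fin μ → Fin n =>
          ((Finset.univ.filter (fun b : Fin n => ∀ a, f a ≠ b)).card : ℝ)
            ≤ (n : ℝ) * Real.exp (-(μ : ℝ) / n) / 2)).card : ℝ)
        / ((Finset.univ : Finset (Fin μ → Fin n)).card : ℝ)
      ≤ C * Real.sqrt μ * Real.exp (-((n : ℝ) * Real.exp (-(μ : ℝ) / n)) / 8) := by
  refine ⟨Real.exp 1, Real.exp_pos 1, fun n μ hn hμ => ?_⟩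
  have hn0 : (0:ℝ) < (n:ℝ)^μ := by
    have : (0:ℝ) < (n:ℝ) := by exact_mod_cast hn
    positivity
  have hden : (((Finset.univ : Finset (Fin μ → Fin n)).card : ℕ) : ℝ) = (n:ℝ)^μ := by
    rw [Finset.card_univ, Fintype.card_fun]
    push_cast
    simp
  rw [hden, div_le_iff₀ hn0]
  calc ((Finset.univ.filter (fun f : Fin μ → Fin n =>
          ((Finset.univ.filter (fun b : Fin n => ∀ a, f a ≠ b)).card : ℝ)
            ≤ (n : ℝ) * Real.exp (-(μ : ℝ) / n) / 2)).card : ℝ)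
      ≤ Real.exp 1 * Real.sqrt μ *
          Real.exp (-((n : ℝ) * Real.exp (-(μ : ℝ) / n)) / 8) * (n:ℝ)^μ :=
        BBaux.main_bound n μ hn hμ
    _ = Real.exp 1 * Real.sqrt μ * Real.exp (-((n : ℝ) * Real.exp (-(μ : ℝ) / n)) / 8) * (n:ℝ)^μ := rfl

end RandomKSAT
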